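/- arXiv:1706.02156 — 3 statements merged into one kernel-verified Lean document; each statement's English description precedes it below -/
import Mathlib

section
/- For all integers n \geq 0, the central binomial coefficient satisfies C(2n+2, n+1) < 2^{2n} * 4 / sqrt(\pi * (n+1)); equivalently, C(2n+2,n+1) * sqrt(\pi*(n+1)) < 2^{2n+2}. -/
open Real Filter Nat Topology

noncomputable def auxF (m : ℕ) : ℝ :=
  (Nat.centralBinom m : ℝ) ^ 2 * Real.pi * m / 16 ^ m

lemma auxF_strictMono : StrictMono auxF := by
  apply strictMono_nat_of_lt_succ
  intro m
  rcases Nat.eq_zero_or_pos m with rfl | hm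
  · simp only [auxF]
    norm_num [Nat.centralBinom]
    positivity
  · have hc : (0:ℝ) < (Nat.centralBinom m : ℝ) := by
      exact_mod_cast Nat.centralBinom_pos m
    have hm1 : (1:ℝ) ≤ (m:ℝ) := by exact_mod_cast hm
    have h : ((m:ℝ) + 1) * (Nat.centralBinom (m+1) : ℝ)
        = 2 * (2 * m + 1) * (Nat.centralBinom m : ℝ) := by
      exact_mod_cast Nat.succ_mul_centralBinom_succ m
    set c : ℝ := (Nat.centralBinom m : ℝ)
    set d : ℝ := (Nat.centralBinom (m+1) : ℝ)
    have h2 : d ^ 2 * ((m:ℝ)+1) ^ 2 = 4 * (2 * m + 1) ^ 2 * c ^ 2 := by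
      have := congrArg (· ^ 2) h
      nlinarith [this]
    have key : 16 * c ^ 2 * (m:ℝ) < d ^ 2 * ((m:ℝ) + 1) := by
      nlinarith [h2, sq_nonneg c, mul_pos hc hc]
    have hP : (0:ℝ) < Real.pi * 16 ^ m := by positivity
    simp only [auxF]
    rw [div_lt_div_iff₀ (by positivity) (by positivity)]
    push_cast
    calc c ^ 2 * Real.pi * m * 16 ^ (m+1)
        = (16 * c ^ 2 * m) * (Real.pi * 16 ^ m) := by rw [pow_succ]; ring
      _ < (d ^ 2 * ((m:ℝ)+1)) * (Real.pi * 16 ^ m) :=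
          mul_lt_mul_of_pos_right key hP
      _ = d ^ 2 * Real.pi * ((m:ℝ)+1) * 16 ^ m := by ring

lemma auxF_eq (m : ℕ) (hm : 1 ≤ m) :
    auxF m = Real.pi * ((m:ℝ) / (2 * m + 1)) / Real.Wallis.W m := by
  have hW := Real.Wallis.W_eq_factorial_ratio m
  have hWpos := Real.Wallis.W_pos m
  have hfac : (0:ℝ) < (m ! : ℝ) := by exact_mod_cast m.factorial_pos
  have hc : (Nat.centralBinom m : ℝ) * ((m ! : ℝ) * (m ! : ℝ)) = ((2*m)! : ℝ) := by
    have := Nat.choose_mul_factorial_mul_factorial (Nat.le_mul_of_pos_left m two_pos)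
    have h2 : 2 * m - m = m := by omega
    rw [h2, mul_assoc] at this
    push_cast [Nat.centralBinom]
    exact_mod_cast this
  have hc' : (Nat.centralBinom m : ℝ) = ((2*m)! : ℝ) / (m ! : ℝ) ^ 2 := by
    field_simp
    nlinarith [hc]
  have h16 : (2:ℝ) ^ (4 * m) = 16 ^ m := by
    rw [pow_mul]; norm_num
  have h2m1 : (0:ℝ) < 2 * (m:ℝ) + 1 := by positivity
  rw [auxF, hc', hW, h16]
  have h2fac : (0:ℝ) < ((2*m)! : ℝ) := by exact_mod_cast (2*m).factorial_pos
  field_simp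

lemma auxF_tendsto : Tendsto auxF atTop (𝓝 1) := by
  have h1 : Tendsto (fun m : ℕ => Real.pi * ((m:ℝ) / (2 * m + 1)) / Real.Wallis.W m)
      atTop (𝓝 (Real.pi * (1/2) / (Real.pi / 2))) := by
    exact (tendsto_const_nhds.mul Stirling.tendsto_self_div_two_mul_self_add_one).div
      Real.Wallis.tendsto_W_nhds_pi_div_two (by positivity)
  have heq : (Real.pi * (1/2) / (Real.pi / 2)) = 1 := by
    field_simp
  rw [heq] at h1
  apply h1.congr'
  filter_upwards [eventually_ge_atTop 1] with m hm
  exact (auxF_eq m hm).symm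

lemma auxF_lt_one (m : ℕ) : auxF m < 1 := by
  have h1 : auxF m < auxF (m+1) := auxF_strictMono (Nat.lt_succ_self m)
  have h2 : auxF (m+1) ≤ 1 :=
    auxF_strictMono.monotone.ge_of_tendsto auxF_tendsto (m+1)
  linarith

/-- For all `n ≥ 0`, `C(2n+2, n+1) < 2^(2n) * 4 / √(π (n+1))`, equivalently
`C(2n+2,n+1) * √(π (n+1)) < 2^(2n+2)`. -/
theorem stmt_3 (n : ℕ) :
    (Nat.choose (2 * n + 2) (n + 1) : ℝ) * Real.sqrt (Real.pi * (n + 1))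
      < 2 ^ (2 * n + 2) := by
  have hcb : Nat.choose (2 * n + 2) (n + 1) = Nat.centralBinom (n+1) := by
    rw [Nat.centralBinom]
    congr 1
  have hf := auxF_lt_one (n+1)
  rw [auxF, div_lt_one (by positivity)] at hf
  have hx : (0:ℝ) ≤ Real.pi * (n + 1) := by positivity
  have hsq : ((Nat.choose (2 * n + 2) (n + 1) : ℝ) * Real.sqrt (Real.pi * (n + 1))) ^ 2
      < ((2:ℝ) ^ (2 * n + 2)) ^ 2 := by
    rw [mul_pow, Real.sq_sqrt hx, ← pow_mul]
    have h16 : (2:ℝ) ^ ((2 * n + 2) * 2) = 16 ^ (n+1) := by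
      rw [show (2 * n + 2) * 2 = 4 * (n+1) by ring, pow_mul]; norm_num
    rw [h16, hcb]
    push_cast at hf ⊢
    nlinarith [hf]
  have hpos : (0:ℝ) ≤ (2:ℝ) ^ (2 * n + 2) := by positivity
  exact lt_of_pow_lt_pow_left₀ 2 hpos hsq
end

section
/- Let k be a field and \Lambda the exterior algebra over k on generators x_1,...,x_n, y_1,...,y_n (all in degree 1). Set w = \sum_{i=1}^n x_i y_i \in \Lambda_2. If char k = 0 or char k > (n+1)/2, then for each i \leq n-1 the multiplication map \lambda_w : \Lambda_i \to \Lambda_{i+2} is injective, and for each i \geq n-1 it is surjective. -/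
open ExteriorAlgebra

namespace LefAux

variable {k V : Type*} [Field k] [AddCommGroup V] [Module k V] {n : ℕ}

variable {k V : Type*} [Field k] [AddCommGroup V] [Module k V] {n : ℕ}

/-- commuting of a product of two `ι`'s with everything -/
lemma commute_pair (u v : V) (z : ExteriorAlgebra k V) :
    Commute (ι k u * ι k v) z := by
  induction z using ExteriorAlgebra.induction with
  | algebraMap r => exact (Algebra.commutes r _).symm
  | ι w =>
    have h1 : ι k v * ι k w = -(ι k w * ι k v) :=
      eq_neg_of_add_eq_zero_left (ι_add_mul_swap v w)
    have h2 : ι k u * ι k w = -(ι k w * ι k u) :=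
      eq_neg_of_add_eq_zero_left (ι_add_mul_swap u w)
    show _ = _
    calc ι k u * ι k v * ι k w = ι k u * (ι k v * ι k w) := by rw [mul_assoc]
    _ = -(ι k u * (ι k w * ι k v)) := by rw [h1, mul_neg]
    _ = -(ι k u * ι k w * ι k v) := by rw [mul_assoc]
    _ = ι k w * ι k u * ι k v := by rw [h2, neg_mul, neg_neg]
    _ = ι k w * (ι k u * ι k v) := by rw [mul_assoc]
  | mul x y hx hy => exact hx.mul_right hy
  | add x y hx hy => exact hx.add_right hy

lemma swap_ι (u v : V) : ι k u * ι k v = -(ι k v * ι k u) :=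
  eq_neg_of_add_eq_zero_left (ι_add_mul_swap u v)

/-- binomial for a square-zero central element -/
lemma pow_add_sq_zero {A : Type*} [Ring A] (u e : A) (hc : ∀ z, Commute e z)
    (he : e * e = 0) (t : ℕ) :
    (u + e) ^ (t + 1) = u ^ (t + 1) + (t + 1) • (u ^ t * e) := by
  induction t with
  | zero => simp
  | succ t ih =>
    have hue : e * u = u * e := (hc u)
    have hcu : u ^ t * e * u = u ^ (t + 1) * e := by
      rw [mul_assoc, hue, ← mul_assoc, ← pow_succ]
    have hce : u ^ t * e * e = 0 := by rw [mul_assoc, he, mul_zero]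
    rw [pow_succ (u + e), ih, add_mul, mul_add, mul_add, smul_mul_assoc,
      smul_mul_assoc, hcu, hce, smul_zero, add_zero, ← pow_succ,
      succ_nsmul (u ^ (t + 1) * e) (t + 1)]
    abel


variable (b : Module.Basis (Fin n ⊕ Fin n) k V)

noncomputable def xv (j : ℕ) : V := if h : j < n then b (Sum.inl ⟨j, h⟩) else 0
noncomputable def yv (j : ℕ) : V := if h : j < n then b (Sum.inr ⟨j, h⟩) else 0
noncomputable def XX (j : ℕ) : ExteriorAlgebra k V := ι k (xv b j)
noncomputable def YY (j : ℕ) : ExteriorAlgebra k V := ι k (yv b j)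
def gv (m : ℕ) : Set V := {v | ∃ j, j < m ∧ (v = xv b j ∨ v = yv b j)}
def G (m : ℕ) : Set (ExteriorAlgebra k V) := (ι k) '' (gv b m)
noncomputable def S (m : ℕ) : Submodule k (ExteriorAlgebra k V) := Submodule.span k (G b m)
noncomputable def Lam (m i : ℕ) : Submodule k (ExteriorAlgebra k V) := S b m ^ i
noncomputable def W (m : ℕ) : ExteriorAlgebra k V := ∑ j ∈ Finset.range m, XX b j * YY b j
def Mon (m : ℕ) : Set (ExteriorAlgebra k V) :=
  {z | ∃ l : List V, (∀ v ∈ l, v ∈ gv b m) ∧ z = (l.map (ι k)).prod}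
noncomputable def Rm (m : ℕ) : Submodule k (ExteriorAlgebra k V) := Submodule.span k (Mon b m)

lemma one_mem_Rm (m : ℕ) : (1 : ExteriorAlgebra k V) ∈ Rm b m :=
  Submodule.subset_span ⟨[], by simp, by simp⟩

lemma mon_mul_mon {m : ℕ} {z z' : ExteriorAlgebra k V} (hz : z ∈ Mon b m)
    (hz' : z' ∈ Mon b m) : z * z' ∈ Mon b m := by
  obtain ⟨l, hl, rfl⟩ := hz
  obtain ⟨l', hl', rfl⟩ := hz'
  refine ⟨l ++ l', ?_, by rw [List.map_append, List.prod_append]⟩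
  intro v hv
  rcases List.mem_append.1 hv with h | h
  exacts [hl v h, hl' v h]

lemma Rm_mul_Rm {m : ℕ} {z z' : ExteriorAlgebra k V} (hz : z ∈ Rm b m)
    (hz' : z' ∈ Rm b m) : z * z' ∈ Rm b m := by
  induction hz using Submodule.span_induction with
  | mem x hx =>
    induction hz' using Submodule.span_induction with
    | mem y hy => exact Submodule.subset_span (mon_mul_mon b hx hy)
    | zero => simp
    | add y₁ y₂ _ _ h1 h2 => rw [mul_add]; exact add_mem h1 h2
    | smul c y _ h => rw [mul_smul_comm]; exact Submodule.smul_mem _ c h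
  | zero => simp
  | add x₁ x₂ _ _ h1 h2 => rw [add_mul]; exact add_mem h1 h2
  | smul c x _ h => rw [smul_mul_assoc]; exact Submodule.smul_mem _ c h

lemma S_le_Rm (m : ℕ) : S b m ≤ Rm b m := by
  apply Submodule.span_le.2
  rintro z ⟨v, hv, rfl⟩
  exact Submodule.subset_span ⟨[v], by simpa using hv, by simp⟩

lemma lam_le_Rm (m i : ℕ) : Lam b m i ≤ Rm b m := by
  induction i with
  | zero =>
    rw [Lam, pow_zero]
    exact (Submodule.one_le).2 (one_mem_Rm b m)
  | succ i ih =>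
    rw [Lam, pow_succ]
    exact Submodule.mul_le.2 fun x hx y hy => Rm_mul_Rm b (ih hx) (S_le_Rm b m hy)

lemma X_mem_S {j m : ℕ} (hj : j < m) : XX b j ∈ S b m :=
  Submodule.subset_span ⟨xv b j, ⟨j, hj, Or.inl rfl⟩, rfl⟩

lemma Y_mem_S {j m : ℕ} (hj : j < m) : YY b j ∈ S b m :=
  Submodule.subset_span ⟨yv b j, ⟨j, hj, Or.inr rfl⟩, rfl⟩

lemma lam_mul_lam {m p q : ℕ} {x z : ExteriorAlgebra k V} (hx : x ∈ Lam b m p)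
    (hz : z ∈ Lam b m q) : x * z ∈ Lam b m (p + q) := by
  rw [Lam, pow_add]; exact Submodule.mul_mem_mul hx hz

lemma mul_mem_lam {m i : ℕ} {x z : ExteriorAlgebra k V} (hx : x ∈ S b m)
    (hz : z ∈ Lam b m i) : x * z ∈ Lam b m (i + 1) := by
  rw [Lam, pow_succ']; exact Submodule.mul_mem_mul hx hz

lemma one_mem_lam (m : ℕ) : (1 : ExteriorAlgebra k V) ∈ Lam b m 0 := by
  rw [Lam, pow_zero]; exact Submodule.one_le.1 le_rfl

lemma W_mem (m : ℕ) : W b m ∈ Lam b m 2 := by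
  apply Submodule.sum_mem
  intro j hj
  have : (2 : ℕ) = 1 + 1 := rfl
  rw [Lam, this, pow_add, pow_one]
  exact Submodule.mul_mem_mul (X_mem_S b (Finset.mem_range.1 hj))
    (Y_mem_S b (Finset.mem_range.1 hj))

lemma Wpow_mem (m t : ℕ) : (W b m) ^ t ∈ Lam b m (2 * t) := by
  induction t with
  | zero => simpa using one_mem_lam b m
  | succ t ih =>
    have : 2 * (t + 1) = 2 * t + 2 := by ring
    rw [pow_succ, this]
    exact lam_mul_lam b ih (W_mem b m)

lemma S_mono {m m' : ℕ} (h : m ≤ m') : S b m ≤ S b m' := by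
  apply Submodule.span_mono
  rintro z ⟨v, ⟨j, hj, hv⟩, rfl⟩
  exact ⟨v, ⟨j, lt_of_lt_of_le hj h, hv⟩, rfl⟩

lemma lam_mono {m m' : ℕ} (h : m ≤ m') (i : ℕ) : Lam b m i ≤ Lam b m' i := by
  induction i with
  | zero => rw [Lam, Lam, pow_zero, pow_zero]
  | succ i ih =>
    rw [Lam, Lam, pow_succ, pow_succ]
    exact mul_le_mul' ih (S_mono b h)

lemma W_comm (m : ℕ) (z : ExteriorAlgebra k V) : Commute (W b m) z :=
  Commute.sum_left _ _ _ fun j _ => commute_pair (xv b j) (yv b j) z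


lemma contract_zero_of_Rm {m : ℕ} (φ : Module.Dual k V) (hφ : ∀ v ∈ gv b m, φ v = 0)
    {z : ExteriorAlgebra k V} (hz : z ∈ Rm b m) :
    CliffordAlgebra.contractLeft φ z = 0 := by
  have hle : Rm b m ≤ LinearMap.ker (CliffordAlgebra.contractLeft (Q := (0 : QuadraticForm k V)) φ) := by
    apply Submodule.span_le.2
    rintro z ⟨l, hl, rfl⟩
    rw [SetLike.mem_coe, LinearMap.mem_ker]
    clear hz
    induction l with
    | nil => simp
    | cons v t ih =>
      rw [List.map_cons, List.prod_cons, CliffordAlgebra.contractLeft_ι_mul,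
        hφ v (hl v (by simp)), ih (fun u hu => hl u (by simp [hu])), zero_smul,
        mul_zero, sub_zero]
  exact hle hz

lemma coord_inl_xv_self {j : ℕ} (hj : j < n) :
    b.coord (Sum.inl ⟨j, hj⟩) (xv b j) = 1 := by
  rw [xv, dif_pos hj, Module.Basis.coord_apply, Module.Basis.repr_self, Finsupp.single_eq_same]

lemma coord_inr_yv_self {j : ℕ} (hj : j < n) :
    b.coord (Sum.inr ⟨j, hj⟩) (yv b j) = 1 := by
  rw [yv, dif_pos hj, Module.Basis.coord_apply, Module.Basis.repr_self, Finsupp.single_eq_same]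

lemma coord_inl_xv_ne {j l : ℕ} (hj : j < n) (h : l ≠ j) :
    b.coord (Sum.inl ⟨j, hj⟩) (xv b l) = 0 := by
  rw [xv]
  split_ifs with h'
  · rw [Module.Basis.coord_apply, Module.Basis.repr_self, Finsupp.single_eq_of_ne]
    simp only [ne_eq, Sum.inl.injEq, Fin.mk.injEq]
    exact Ne.symm h
  · simp

lemma coord_inr_yv_ne {j l : ℕ} (hj : j < n) (h : l ≠ j) :
    b.coord (Sum.inr ⟨j, hj⟩) (yv b l) = 0 := by
  rw [yv]
  split_ifs with h'
  · rw [Module.Basis.coord_apply, Module.Basis.repr_self, Finsupp.single_eq_of_ne]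
    simp only [ne_eq, Sum.inr.injEq, Fin.mk.injEq]
    exact Ne.symm h
  · simp

lemma coord_inl_yv {j l : ℕ} (hj : j < n) :
    b.coord (Sum.inl ⟨j, hj⟩) (yv b l) = 0 := by
  rw [yv]
  split_ifs with h'
  · rw [Module.Basis.coord_apply, Module.Basis.repr_self, Finsupp.single_eq_of_ne]
    simp
  · simp

lemma coord_inr_xv {j l : ℕ} (hj : j < n) :
    b.coord (Sum.inr ⟨j, hj⟩) (xv b l) = 0 := by
  rw [xv]
  split_ifs with h'
  · rw [Module.Basis.coord_apply, Module.Basis.repr_self, Finsupp.single_eq_of_ne]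
    simp
  · simp

lemma contract_inl_Rm {j : ℕ} (hj : j < n) {z : ExteriorAlgebra k V} (hz : z ∈ Rm b j) :
    CliffordAlgebra.contractLeft (b.coord (Sum.inl ⟨j, hj⟩)) z = 0 := by
  apply contract_zero_of_Rm b _ _ hz
  rintro v ⟨l, hl, (rfl | rfl)⟩
  · exact coord_inl_xv_ne b hj (Nat.ne_of_lt hl)
  · exact coord_inl_yv b hj

lemma contract_inr_Rm {j : ℕ} (hj : j < n) {z : ExteriorAlgebra k V} (hz : z ∈ Rm b j) :
    CliffordAlgebra.contractLeft (b.coord (Sum.inr ⟨j, hj⟩)) z = 0 := by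
  apply contract_zero_of_Rm b _ _ hz
  rintro v ⟨l, hl, (rfl | rfl)⟩
  · exact coord_inr_xv b hj
  · exact coord_inr_yv_ne b hj (Nat.ne_of_lt hl)

lemma component_eq_zero {j : ℕ} (hj : j < n) {a bb cc dd : ExteriorAlgebra k V}
    (ha : a ∈ Rm b j) (hb : bb ∈ Rm b j) (hc : cc ∈ Rm b j) (hd : dd ∈ Rm b j)
    (h : a + XX b j * bb + YY b j * cc + XX b j * (YY b j * dd) = 0) :
    a = 0 ∧ bb = 0 ∧ cc = 0 ∧ dd = 0 := by
  have killφ := fun {z} (hz : z ∈ Rm b j) => contract_inl_Rm b hj hz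
  have killψ := fun {z} (hz : z ∈ Rm b j) => contract_inr_Rm b hj hz
  set φ := b.coord (Sum.inl ⟨j, hj⟩)
  set ψ := b.coord (Sum.inr ⟨j, hj⟩)
  have e1 : cc - XX b j * dd = 0 := by
    have := congrArg (CliffordAlgebra.contractLeft ψ) h
    rw [map_zero, map_add, map_add, map_add, killψ ha, XX, YY,
      CliffordAlgebra.contractLeft_ι_mul, CliffordAlgebra.contractLeft_ι_mul,
      CliffordAlgebra.contractLeft_ι_mul, CliffordAlgebra.contractLeft_ι_mul,
      killψ hb, killψ hc, killψ hd, coord_inr_xv b hj, coord_inr_yv_self b hj] at this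
    simpa [sub_eq_add_neg, XX] using this
  have hdd : dd = 0 := by
    have := congrArg (CliffordAlgebra.contractLeft φ) e1
    rw [map_zero, map_sub, killφ hc, XX, CliffordAlgebra.contractLeft_ι_mul,
      killφ hd, coord_inl_xv_self b hj] at this
    simpa using this
  have hcc : cc = 0 := by
    have := e1
    rw [hdd, mul_zero, sub_zero] at this
    exact this
  have hbb : bb = 0 := by
    have := congrArg (CliffordAlgebra.contractLeft φ) h
    rw [map_zero, map_add, map_add, map_add, killφ ha, XX, YY,
      CliffordAlgebra.contractLeft_ι_mul, CliffordAlgebra.contractLeft_ι_mul,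
      CliffordAlgebra.contractLeft_ι_mul, CliffordAlgebra.contractLeft_ι_mul,
      killφ hb, killφ hc, killφ hd, coord_inl_xv_self b hj, coord_inl_yv b hj,
      hdd] at this
    simpa using this
  have haa : a = 0 := by
    rw [hbb, hcc, hdd] at h
    simpa using h
  exact ⟨haa, hbb, hcc, hdd⟩


lemma swap3 (v u : V) (z : ExteriorAlgebra k V) :
    ι k v * (ι k u * z) = -(ι k u * (ι k v * z)) := by
  rw [← mul_assoc, swap_ι v u, neg_mul, mul_assoc]

lemma mul_mem_lam_pred {j i : ℕ} {g z : ExteriorAlgebra k V} (hg : g ∈ S b j)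
    (hz : z ∈ Lam b j (i - 1)) (hflag : i = 0 → z = 0) : g * z ∈ Lam b j i := by
  cases i with
  | zero => rw [hflag rfl, mul_zero]; exact zero_mem _
  | succ i' => exact mul_mem_lam b hg hz

lemma mul_mem_lam_pred2 {j i : ℕ} {g z : ExteriorAlgebra k V} (hg : g ∈ S b j)
    (hz : z ∈ Lam b j (i - 2)) (hflag : i ≤ 1 → z = 0) : g * z ∈ Lam b j (i - 1) := by
  rcases i with _ | _ | i'
  · rw [hflag (by omega), mul_zero]; exact zero_mem _
  · rw [hflag (by omega), mul_zero]; exact zero_mem _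
  · exact mul_mem_lam b hg hz

def DecompP (j deg : ℕ) (x : ExteriorAlgebra k V) : Prop :=
  ∃ a bb cc dd : ExteriorAlgebra k V,
    a ∈ Lam b j deg ∧ bb ∈ Lam b j (deg - 1) ∧ cc ∈ Lam b j (deg - 1) ∧
    dd ∈ Lam b j (deg - 2) ∧ (deg = 0 → bb = 0 ∧ cc = 0) ∧ (deg ≤ 1 → dd = 0) ∧
    x = a + XX b j * bb + YY b j * cc + XX b j * (YY b j * dd)

lemma decompP_zero (j deg : ℕ) : DecompP b j deg 0 :=
  ⟨0, 0, 0, 0, zero_mem _, zero_mem _, zero_mem _, zero_mem _,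
    fun _ => ⟨rfl, rfl⟩, fun _ => rfl, by simp⟩

lemma decompP_add {j deg : ℕ} {x y : ExteriorAlgebra k V} (hx : DecompP b j deg x)
    (hy : DecompP b j deg y) : DecompP b j deg (x + y) := by
  obtain ⟨a1, b1, c1, d1, m1, m2, m3, m4, f1, f2, rfl⟩ := hx
  obtain ⟨a2, b2, c2, d2, m1', m2', m3', m4', f1', f2', rfl⟩ := hy
  refine ⟨a1 + a2, b1 + b2, c1 + c2, d1 + d2, add_mem m1 m1', add_mem m2 m2',
    add_mem m3 m3', add_mem m4 m4', ?_, ?_, ?_⟩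
  · intro h
    exact ⟨by rw [(f1 h).1, (f1' h).1, add_zero], by rw [(f1 h).2, (f1' h).2, add_zero]⟩
  · intro h; rw [f2 h, f2' h, add_zero]
  · rw [mul_add (XX b j) b1 b2, mul_add (YY b j) c1 c2, mul_add (YY b j) d1 d2,
      mul_add (XX b j)]
    abel

lemma decompP_smul {j deg : ℕ} (r : k) {x : ExteriorAlgebra k V} (hx : DecompP b j deg x) :
    DecompP b j deg (r • x) := by
  obtain ⟨a1, b1, c1, d1, m1, m2, m3, m4, f1, f2, rfl⟩ := hx
  refine ⟨r • a1, r • b1, r • c1, r • d1, Submodule.smul_mem _ r m1,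
    Submodule.smul_mem _ r m2, Submodule.smul_mem _ r m3, Submodule.smul_mem _ r m4,
    ?_, ?_, ?_⟩
  · intro h; exact ⟨by rw [(f1 h).1, smul_zero], by rw [(f1 h).2, smul_zero]⟩
  · intro h; rw [f2 h, smul_zero]
  · rw [smul_add, smul_add, smul_add, mul_smul_comm, mul_smul_comm, mul_smul_comm,
      mul_smul_comm]

lemma decomp (j : ℕ) : ∀ i, ∀ x ∈ Lam b (j + 1) i, DecompP b j i x := by
  intro i
  induction i with
  | zero =>
    intro x hx
    refine ⟨x, 0, 0, 0, ?_, zero_mem _, zero_mem _, zero_mem _,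
      fun _ => ⟨rfl, rfl⟩, fun _ => rfl, by simp⟩
    rw [Lam, pow_zero] at hx ⊢
    exact hx
  | succ i ih =>
    intro x hx
    rw [Lam, pow_succ'] at hx
    refine Submodule.mul_induction_on hx (fun p hp q hq => ?_)
      (fun x y hx hy => decompP_add b hx hy)
    induction hp using Submodule.span_induction with
      | zero => rw [zero_mul]; exact decompP_zero b j (i + 1)
      | add p1 p2 _ _ h1 h2 => rw [add_mul]; exact decompP_add b h1 h2
      | smul r p _ h => rw [smul_mul_assoc]; exact decompP_smul b r h
      | mem z hz =>
        obtain ⟨v, ⟨l, hl, hv⟩, rfl⟩ := hz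
        obtain ⟨a, bb, cc, dd, ma, mb, mc, md, f0, f1, rfl⟩ := ih q hq
        rcases hv with rfl | rfl <;> rcases Nat.lt_succ_iff_lt_or_eq.1 hl with hl' | rfl
        · -- g = X l, l < j
          have hgS : ι k (xv b l) ∈ S b j :=
            Submodule.subset_span ⟨xv b l, ⟨l, hl', Or.inl rfl⟩, rfl⟩
          refine ⟨ι k (xv b l) * a, -(ι k (xv b l) * bb), -(ι k (xv b l) * cc),
            ι k (xv b l) * dd, mul_mem_lam b hgS ma,
            neg_mem (mul_mem_lam_pred b hgS mb (fun h => (f0 h).1)),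
            neg_mem (mul_mem_lam_pred b hgS mc (fun h => (f0 h).2)),
            mul_mem_lam_pred2 b hgS md f1,
            fun h => absurd h (Nat.succ_ne_zero i), ?_, ?_⟩
          · intro h; rw [f1 (by omega), mul_zero]
          · simp only [XX, YY]
            rw [mul_add, mul_add, mul_add,
              swap3 (xv b l) (xv b j) bb, swap3 (xv b l) (yv b j) cc,
              swap3 (xv b l) (xv b j) (ι k (yv b j) * dd),
              swap3 (xv b l) (yv b j) dd, mul_neg, mul_neg, mul_neg, neg_neg]
        · -- g = X j
          refine ⟨0, a, 0, cc, zero_mem _, ma, zero_mem _, mc,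
            fun h => absurd h (Nat.succ_ne_zero i),
            fun h => (f0 (by omega)).2, ?_⟩
          simp only [XX, YY]
          rw [mul_add, mul_add, mul_add,
            ← mul_assoc (ι k (xv b l)) (ι k (xv b l)) bb, ι_sq_zero, zero_mul,
            ← mul_assoc (ι k (xv b l)) (ι k (xv b l)) (ι k (yv b l) * dd),
            ι_sq_zero, zero_mul, mul_zero]
          abel
        · -- g = Y l, l < j
          have hgS : ι k (yv b l) ∈ S b j :=
            Submodule.subset_span ⟨yv b l, ⟨l, hl', Or.inr rfl⟩, rfl⟩
          refine ⟨ι k (yv b l) * a, -(ι k (yv b l) * bb), -(ι k (yv b l) * cc),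
            ι k (yv b l) * dd, mul_mem_lam b hgS ma,
            neg_mem (mul_mem_lam_pred b hgS mb (fun h => (f0 h).1)),
            neg_mem (mul_mem_lam_pred b hgS mc (fun h => (f0 h).2)),
            mul_mem_lam_pred2 b hgS md f1,
            fun h => absurd h (Nat.succ_ne_zero i), ?_, ?_⟩
          · intro h; rw [f1 (by omega), mul_zero]
          · simp only [XX, YY]
            rw [mul_add, mul_add, mul_add,
              swap3 (yv b l) (xv b j) bb, swap3 (yv b l) (yv b j) cc,
              swap3 (yv b l) (xv b j) (ι k (yv b j) * dd),
              swap3 (yv b l) (yv b j) dd, mul_neg, mul_neg, mul_neg, neg_neg]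
        · -- g = Y j
          refine ⟨0, 0, a, -bb, zero_mem _, zero_mem _, ma, neg_mem mb,
            fun h => absurd h (Nat.succ_ne_zero i),
            fun h => by rw [(f0 (by omega)).1, neg_zero], ?_⟩
          simp only [XX, YY]
          rw [mul_add, mul_add, mul_add,
            swap3 (yv b l) (xv b l) bb,
            ← mul_assoc (ι k (yv b l)) (ι k (yv b l)) cc, ι_sq_zero, zero_mul,
            swap3 (yv b l) (xv b l) (ι k (yv b l) * dd),
            ← mul_assoc (ι k (yv b l)) (ι k (yv b l)) dd, ι_sq_zero, zero_mul,
            mul_zero, neg_zero, mul_neg, mul_neg]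
          abel

lemma lam_high : ∀ m i, 2 * m < i → ∀ x ∈ Lam b m i, x = 0 := by
  intro m
  induction m with
  | zero =>
    intro i hi x hx
    have hS : S b 0 = ⊥ := by
      rw [S]
      convert Submodule.span_empty
      ext z
      simp [G, gv]
    obtain ⟨i', rfl⟩ : ∃ i', i = i' + 1 := ⟨i - 1, by omega⟩
    rw [Lam, hS, pow_succ, Submodule.mul_bot] at hx
    simpa using hx
  | succ m ihm =>
    intro i hi x hx
    obtain ⟨a, bb, cc, dd, ma, mb, mc, md, f0, f1, rfl⟩ := decomp b m i x hx
    rw [ihm i (by omega) a ma, ihm (i - 1) (by omega) bb mb,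
      ihm (i - 1) (by omega) cc mc, ihm (i - 2) (by omega) dd md]
    simp


lemma W_succ (m : ℕ) : W b (m + 1) = W b m + XX b m * YY b m := by
  rw [W, W, Finset.sum_range_succ]

lemma e_mul_X (m : ℕ) (z : ExteriorAlgebra k V) :
    (XX b m * YY b m) * (XX b m * z) = 0 := by
  simp only [XX, YY]
  rw [mul_assoc, swap3 (yv b m) (xv b m) z, mul_neg,
    ← mul_assoc (ι k (xv b m)) (ι k (xv b m)), ι_sq_zero, zero_mul, neg_zero]


lemma e_mul_Y (m : ℕ) (z : ExteriorAlgebra k V) :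
    (XX b m * YY b m) * (YY b m * z) = 0 := by
  simp only [XX, YY]
  rw [mul_assoc, ← mul_assoc (ι k (yv b m)) (ι k (yv b m)), ι_sq_zero, zero_mul, mul_zero]

lemma e_sq (m : ℕ) : (XX b m * YY b m) * (XX b m * YY b m) = 0 := e_mul_X b m (YY b m)

lemma e_comm (m : ℕ) (z : ExteriorAlgebra k V) : Commute (XX b m * YY b m) z := by
  simpa [XX, YY] using commute_pair (xv b m) (yv b m) z

lemma comm_shift (m s : ℕ) (u : V) (z : ExteriorAlgebra k V) :
    (W b m) ^ s * (ι k u * z) = ι k u * ((W b m) ^ s * z) := by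
  rw [← mul_assoc, ((W_comm b m (ι k u)).pow_left s).eq, mul_assoc]

lemma X_comm_shift (m s j : ℕ) (z : ExteriorAlgebra k V) :
    (W b m) ^ s * (XX b j * z) = XX b j * ((W b m) ^ s * z) := by
  simp only [XX]; exact comm_shift b m s (xv b j) z

lemma Y_comm_shift (m s j : ℕ) (z : ExteriorAlgebra k V) :
    (W b m) ^ s * (YY b j * z) = YY b j * ((W b m) ^ s * z) := by
  simp only [YY]; exact comm_shift b m s (yv b j) z

lemma W_mem_Rm (m : ℕ) : W b m ∈ Rm b m := by
  apply Submodule.sum_mem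
  intro j hj
  have hj' := Finset.mem_range.1 hj
  apply Submodule.subset_span
  refine ⟨[xv b j, yv b j], ?_, by simp [XX, YY]⟩
  intro v hv
  rcases List.mem_pair.1 hv with rfl | rfl
  exacts [⟨j, hj', Or.inl rfl⟩, ⟨j, hj', Or.inr rfl⟩]

lemma Wpow_mem_Rm (m s : ℕ) : (W b m) ^ s ∈ Rm b m := by
  induction s with
  | zero => simpa using one_mem_Rm b m
  | succ s ih => rw [pow_succ]; exact Rm_mul_Rm b ih (W_mem_Rm b m)

lemma expand (m t : ℕ) (a bb cc dd : ExteriorAlgebra k V) :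
    (W b (m + 1)) ^ (t + 1) *
      (a + XX b m * bb + YY b m * cc + XX b m * (YY b m * dd)) =
    (W b m) ^ (t + 1) * a + XX b m * ((W b m) ^ (t + 1) * bb) +
      YY b m * ((W b m) ^ (t + 1) * cc) +
      XX b m * (YY b m * ((W b m) ^ (t + 1) * dd + (t + 1) • ((W b m) ^ t * a))) := by
  rw [W_succ b m, pow_add_sq_zero (W b m) (XX b m * YY b m) (e_comm b m) (e_sq b m) t]
  rw [add_mul, smul_mul_assoc]
  rw [mul_add, mul_add, mul_add, mul_add, mul_add, mul_add]
  rw [X_comm_shift, Y_comm_shift, X_comm_shift, Y_comm_shift]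
  rw [mul_assoc ((W b m) ^ t) (XX b m * YY b m) a,
    mul_assoc ((W b m) ^ t) (XX b m * YY b m) (XX b m * bb),
    mul_assoc ((W b m) ^ t) (XX b m * YY b m) (YY b m * cc),
    mul_assoc ((W b m) ^ t) (XX b m * YY b m) (XX b m * (YY b m * dd))]
  rw [e_mul_X, e_mul_Y, e_mul_X, mul_zero, add_zero, add_zero, add_zero]
  rw [mul_assoc (XX b m) (YY b m) a, X_comm_shift, Y_comm_shift]
  rw [mul_add (YY b m), mul_add (XX b m), mul_smul_comm, mul_smul_comm]
  abel

lemma main_inj : ∀ m, m ≤ n → ∀ s i, 1 ≤ s → i + s ≤ m →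
    (∀ j' : ℕ, 1 ≤ j' → 2 * j' ≤ i + 2 * s → (j' : k) ≠ 0) →
    ∀ x ∈ Lam b m i, (W b m) ^ s * x = 0 → x = 0 := by
  intro m
  induction m with
  | zero => intro _ s i hs hsi _ x _ _; omega
  | succ m ihm =>
    intro hmn s i hs hsi hscal x hx hWx
    have hmn' : m ≤ n := by omega
    have hmlt : m < n := by omega
    obtain ⟨t, rfl⟩ : ∃ t, s = t + 1 := ⟨s - 1, by omega⟩
    obtain ⟨a, bb, cc, dd, ma, mb, mc, md, f0, f1, rfl⟩ := decomp b m i x hx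
    rw [expand b m t] at hWx
    have rma : (W b m) ^ (t + 1) * a ∈ Rm b m :=
      Rm_mul_Rm b (Wpow_mem_Rm b m (t + 1)) (lam_le_Rm b m i ma)
    have rmb : (W b m) ^ (t + 1) * bb ∈ Rm b m :=
      Rm_mul_Rm b (Wpow_mem_Rm b m (t + 1)) (lam_le_Rm b m _ mb)
    have rmc : (W b m) ^ (t + 1) * cc ∈ Rm b m :=
      Rm_mul_Rm b (Wpow_mem_Rm b m (t + 1)) (lam_le_Rm b m _ mc)
    have rmd : (W b m) ^ (t + 1) * dd + (t + 1) • ((W b m) ^ t * a) ∈ Rm b m := by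
      apply add_mem
      · exact Rm_mul_Rm b (Wpow_mem_Rm b m (t + 1)) (lam_le_Rm b m _ md)
      · exact nsmul_mem (Rm_mul_Rm b (Wpow_mem_Rm b m t) (lam_le_Rm b m i ma)) (t + 1)
    obtain ⟨E1, E2, E3, E4⟩ := component_eq_zero b hmlt rma rmb rmc rmd hWx
    have hbb : bb = 0 := by
      cases i with
      | zero => exact (f0 rfl).1
      | succ i' =>
        exact ihm hmn' (t + 1) i' hs (by omega)
          (fun j' h1 h2 => hscal j' h1 (by omega)) bb mb E2
    have hcc : cc = 0 := by
      cases i with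
      | zero => exact (f0 rfl).2
      | succ i' =>
        exact ihm hmn' (t + 1) i' hs (by omega)
          (fun j' h1 h2 => hscal j' h1 (by omega)) cc mc E3
    by_cases hcase : i + (t + 1) ≤ m
    · have haa : a = 0 :=
        ihm hmn' (t + 1) i hs hcase (fun j' h1 h2 => hscal j' h1 (by omega)) a ma E1
      have hdd : dd = 0 := by
        rcases i with _ | _ | i''
        · exact f1 (by omega)
        · exact f1 (by omega)
        · have E4' : (W b m) ^ (t + 1) * dd = 0 := by
            rw [haa, mul_zero, smul_zero, add_zero] at E4
            exact E4
          exact ihm hmn' (t + 1) i'' hs (by omega)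
            (fun j' h1 h2 => hscal j' h1 (by omega)) dd md E4'
      rw [haa, hbb, hcc, hdd]
      simp
    · -- equality case : i + t = m
      have heq : i + t = m := by omega
      have hdd : dd = 0 := by
        rcases i with _ | _ | i''
        · exact f1 (by omega)
        · exact f1 (by omega)
        · have E4' : (W b m) ^ (t + 2) * dd = 0 := by
            have := congrArg (fun z => W b m * z) E4
            simp only [mul_add, mul_smul_comm, ← mul_assoc, ← pow_succ'] at this
            rw [mul_zero] at this
            rw [show t + 1 + 1 = t + 2 from rfl] at this
            rw [E1, smul_zero, add_zero] at this
            exact this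
          exact ihm hmn' (t + 2) i'' (by omega) (by omega)
            (fun j' h1 h2 => hscal j' h1 (by omega)) dd md E4'
      have hWta : (W b m) ^ t * a = 0 := by
        rw [hdd, mul_zero, zero_add] at E4
        have hcast : ((t + 1 : ℕ) : k) • ((W b m) ^ t * a) = 0 := by
          rw [Nat.cast_smul_eq_nsmul]
          exact E4
        have hne : ((t + 1 : ℕ) : k) ≠ 0 := hscal (t + 1) (by omega) (by omega)
        rcases smul_eq_zero.1 hcast with h | h
        · exact absurd h hne
        · exact h
      have haa : a = 0 := by
        cases t with
        | zero => simpa using hWta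
        | succ t' =>
          exact ihm hmn' (t' + 1) i (by omega) (by omega)
            (fun j' h1 h2 => hscal j' h1 (by omega)) a ma hWta
      rw [haa, hbb, hcc, hdd]
      simp

lemma main_surj : ∀ m, m ≤ n → ∀ s i, m ≤ i + s →
    (∀ j' : ℕ, 1 ≤ j' → 2 * j' ≤ 2 * m - i → (j' : k) ≠ 0) →
    ∀ y ∈ Lam b m (i + 2 * s), ∃ x ∈ Lam b m i, (W b m) ^ s * x = y := by
  intro m
  induction m with
  | zero =>
    intro _ s i _ _ y hy
    cases s with
    | zero => exact ⟨y, by simpa using hy, by simp⟩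
    | succ t =>
      refine ⟨0, zero_mem _, ?_⟩
      rw [mul_zero]
      exact (lam_high b 0 (i + 2 * (t + 1)) (by omega) y hy).symm
  | succ m ihm =>
    intro hmn s i hmi hscal y hy
    have hmn' : m ≤ n := by omega
    cases s with
    | zero => exact ⟨y, by simpa using hy, by simp⟩
    | succ t =>
    obtain ⟨a, bb, cc, dd, ma, mb, mc, md, f0, f1, rfl⟩ :=
      decomp b m (i + 2 * (t + 1)) y hy
    have hb' : ∃ b', b' ∈ Lam b m (i - 1) ∧ (i = 0 → b' = 0) ∧
        (W b m) ^ (t + 1) * b' = bb := by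
      cases i with
      | zero =>
        refine ⟨0, zero_mem _, fun _ => rfl, ?_⟩
        rw [mul_zero]
        exact (lam_high b m (0 + 2 * (t + 1) - 1) (by omega) bb mb).symm
      | succ i' =>
        obtain ⟨b', hb'mem, hb'eq⟩ := ihm hmn' (t + 1) i' (by omega)
          (fun j' h1 h2 => hscal j' h1 (by omega)) bb
          ((show i' + 1 + 2 * (t + 1) - 1 = i' + 2 * (t + 1) by omega) ▸ mb)
        exact ⟨b', hb'mem, fun h => absurd h (Nat.succ_ne_zero i'), hb'eq⟩
    have hc' : ∃ c', c' ∈ Lam b m (i - 1) ∧ (i = 0 → c' = 0) ∧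
        (W b m) ^ (t + 1) * c' = cc := by
      cases i with
      | zero =>
        refine ⟨0, zero_mem _, fun _ => rfl, ?_⟩
        rw [mul_zero]
        exact (lam_high b m (0 + 2 * (t + 1) - 1) (by omega) cc mc).symm
      | succ i' =>
        obtain ⟨c', hc'mem, hc'eq⟩ := ihm hmn' (t + 1) i' (by omega)
          (fun j' h1 h2 => hscal j' h1 (by omega)) cc
          ((show i' + 1 + 2 * (t + 1) - 1 = i' + 2 * (t + 1) by omega) ▸ mc)
        exact ⟨c', hc'mem, fun h => absurd h (Nat.succ_ne_zero i'), hc'eq⟩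
    have had' : ∃ a' d', a' ∈ Lam b m i ∧ d' ∈ Lam b m (i - 2) ∧ (i ≤ 1 → d' = 0) ∧
        (W b m) ^ (t + 1) * a' = a ∧
        (W b m) ^ (t + 1) * d' + (t + 1) • ((W b m) ^ t * a') = dd := by
      by_cases hcase : m + 1 ≤ i + t
      · obtain ⟨a', ha'mem, ha'eq⟩ := ihm hmn' (t + 1) i (by omega)
          (fun j' h1 h2 => hscal j' h1 (by omega)) a ma
        rcases Nat.lt_or_ge i 2 with hi2 | hi2
        · have hdd0 : dd = 0 := lam_high b m _ (by omega) dd md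
          have hWta' : (W b m) ^ t * a' ∈ Lam b m (2 * t + i) :=
            lam_mul_lam b (Wpow_mem b m t) ha'mem
          have h0 : (W b m) ^ t * a' = 0 := lam_high b m (2 * t + i) (by omega) _ hWta'
          refine ⟨a', 0, ha'mem, zero_mem _, fun _ => rfl, ha'eq, ?_⟩
          rw [mul_zero, zero_add, h0, smul_zero, hdd0]
        · obtain ⟨i'', rfl⟩ : ∃ i'', i = i'' + 2 := ⟨i - 2, by omega⟩
          have hδmem : dd - (t + 1) • ((W b m) ^ t * a') ∈ Lam b m (i'' + 2 * (t + 1)) := by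
            apply sub_mem
            · exact (show i'' + 2 + 2 * (t + 1) - 2 = i'' + 2 * (t + 1) by omega) ▸ md
            · exact nsmul_mem ((show 2 * t + (i'' + 2) = i'' + 2 * (t + 1) by omega) ▸
                lam_mul_lam b (Wpow_mem b m t) ha'mem) (t + 1)
          obtain ⟨d', hd'mem, hd'eq⟩ := ihm hmn' (t + 1) i'' (by omega)
            (fun j' h1 h2 => hscal j' h1 (by omega)) _ hδmem
          refine ⟨a', d', ha'mem, hd'mem, fun h => absurd h (by omega), ha'eq, ?_⟩
          rw [hd'eq]
          abel
      · have heq : i + t = m := by omega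
        have hσ : ((t + 1 : ℕ) : k) ≠ 0 := hscal (t + 1) (by omega) (by omega)
        have hddmem : ((t + 1 : ℕ) : k)⁻¹ • dd ∈ Lam b m (i + 2 * t) :=
          Submodule.smul_mem _ _
            ((show i + 2 * (t + 1) - 2 = i + 2 * t by omega) ▸ md)
        obtain ⟨a₁, ha₁mem, ha₁eq⟩ := ihm hmn' t i (by omega)
          (fun j' h1 h2 => hscal j' h1 (by omega)) _ hddmem
        have hsmul_a₁ : (t + 1) • ((W b m) ^ t * a₁) = dd := by
          rw [ha₁eq, ← Nat.cast_smul_eq_nsmul k, smul_smul, mul_inv_cancel₀ hσ, one_smul]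
        have hρmem : a - (W b m) ^ (t + 1) * a₁ ∈ Lam b m (i + 2 * (t + 1)) := by
          apply sub_mem ma
          exact (show 2 * (t + 1) + i = i + 2 * (t + 1) by omega) ▸
            lam_mul_lam b (Wpow_mem b m (t + 1)) ha₁mem
        rcases Nat.lt_or_ge i 2 with hi2 | hi2
        · have hρ0 : a - (W b m) ^ (t + 1) * a₁ = 0 := lam_high b m _ (by omega) _ hρmem
          refine ⟨a₁, 0, ha₁mem, zero_mem _, fun _ => rfl, (sub_eq_zero.1 hρ0).symm, ?_⟩
          rw [mul_zero, zero_add, hsmul_a₁]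
        · obtain ⟨i'', rfl⟩ : ∃ i'', i = i'' + 2 := ⟨i - 2, by omega⟩
          have hτmem : -(((t + 1 : ℕ) : k) • (a - (W b m) ^ (t + 1) * a₁)) ∈
              Lam b m (i'' + 2 * (t + 2)) := by
            apply neg_mem
            exact Submodule.smul_mem _ _
              ((show i'' + 2 + 2 * (t + 1) = i'' + 2 * (t + 2) by omega) ▸ hρmem)
          obtain ⟨v, hvmem, hveq⟩ := ihm hmn' (t + 2) i'' (by omega)
            (fun j' h1 h2 => hscal j' h1 (by omega)) _ hτmem
          set u := -(((t + 1 : ℕ) : k)⁻¹ • (W b m * v)) with hu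
          have humem : u ∈ Lam b m (i'' + 2) := by
            apply neg_mem
            exact Submodule.smul_mem _ _
              ((show 2 + i'' = i'' + 2 by omega) ▸ lam_mul_lam b (W_mem b m) hvmem)
          have hWsu : (W b m) ^ (t + 1) * u = a - (W b m) ^ (t + 1) * a₁ := by
            rw [hu, mul_neg, mul_smul_comm, ← mul_assoc, ← pow_succ, hveq, smul_neg,
              neg_neg, smul_smul, inv_mul_cancel₀ hσ, one_smul]
          have hWtu : (t + 1) • ((W b m) ^ t * u) = -((W b m) ^ (t + 1) * v) := by
            rw [hu, mul_neg, mul_smul_comm, ← mul_assoc, ← pow_succ,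
              ← Nat.cast_smul_eq_nsmul k, smul_neg, smul_smul, mul_inv_cancel₀ hσ,
              one_smul]
          refine ⟨a₁ + u, v, add_mem ha₁mem humem, hvmem,
            fun h => absurd h (by omega), ?_, ?_⟩
          · rw [mul_add, hWsu]
            abel
          · rw [mul_add ((W b m) ^ t) a₁ u, smul_add, hsmul_a₁, hWtu]
            abel
    obtain ⟨b', hb'mem, hb'flag, hb'eq⟩ := hb'
    obtain ⟨c', hc'mem, hc'flag, hc'eq⟩ := hc'
    obtain ⟨a', d', ha'mem, hd'mem, hd'flag, ha'eq, hd'eq⟩ := had'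
    refine ⟨a' + XX b m * b' + YY b m * c' + XX b m * (YY b m * d'), ?_, ?_⟩
    · refine add_mem (add_mem (add_mem (lam_mono b (Nat.le_succ m) i ha'mem) ?_) ?_) ?_
      · cases i with
        | zero => rw [hb'flag rfl, mul_zero]; exact zero_mem _
        | succ i' =>
          exact mul_mem_lam b (X_mem_S b (Nat.lt_succ_self m))
            (lam_mono b (Nat.le_succ m) i' hb'mem)
      · cases i with
        | zero => rw [hc'flag rfl, mul_zero]; exact zero_mem _
        | succ i' =>
          exact mul_mem_lam b (Y_mem_S b (Nat.lt_succ_self m))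
            (lam_mono b (Nat.le_succ m) i' hc'mem)
      · rcases i with _ | _ | i''
        · rw [hd'flag (by omega), mul_zero, mul_zero]; exact zero_mem _
        · rw [hd'flag (by omega), mul_zero, mul_zero]; exact zero_mem _
        · exact mul_mem_lam b (X_mem_S b (Nat.lt_succ_self m))
            (mul_mem_lam b (Y_mem_S b (Nat.lt_succ_self m))
              (lam_mono b (Nat.le_succ m) i'' hd'mem))
    · rw [expand b m t, ha'eq, hb'eq, hc'eq, hd'eq]

lemma S_top : S b n = LinearMap.range (ι k : V →ₗ[k] ExteriorAlgebra k V) := by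
  apply le_antisymm
  · rw [S, Submodule.span_le]
    rintro z ⟨v, _, rfl⟩
    exact ⟨v, rfl⟩
  · rintro z ⟨v, rfl⟩
    have hv : v ∈ Submodule.span k (Set.range ⇑b) := by
      rw [b.span_eq]; trivial
    have hmap : Submodule.map (ι k : V →ₗ[k] ExteriorAlgebra k V)
        (Submodule.span k (Set.range ⇑b)) ≤ S b n := by
      rw [Submodule.map_span, S]
      apply Submodule.span_mono
      rintro z ⟨v', ⟨idx, rfl⟩, rfl⟩
      rcases idx with p | p
      · refine ⟨b (Sum.inl p), ⟨(p : ℕ), p.isLt, Or.inl ?_⟩, rfl⟩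
        rw [xv, dif_pos p.isLt]
      · refine ⟨b (Sum.inr p), ⟨(p : ℕ), p.isLt, Or.inr ?_⟩, rfl⟩
        rw [yv, dif_pos p.isLt]
    exact hmap ⟨v, hv, rfl⟩

lemma W_eq : W b n = ∑ p : Fin n, ι k (b (Sum.inl p)) * ι k (b (Sum.inr p)) := by
  rw [W, ← Fin.sum_univ_eq_sum_range (fun j => XX b j * YY b j) n]
  apply Finset.sum_congr rfl
  intro p _
  simp only [XX, YY, xv, yv, dif_pos p.isLt]

lemma char_cond (hchar : ∀ p : ℕ, CharP k p → p = 0 ∨ n + 1 < 2 * p) :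
    ∀ j' : ℕ, 1 ≤ j' → 2 * j' ≤ n + 1 → (j' : k) ≠ 0 := by
  intro j' h1 h2 h0
  have hp : CharP k (ringChar k) := ringChar.charP k
  rcases hchar (ringChar k) hp with h | h
  · have := (CharP.cast_eq_zero_iff k (ringChar k) j').1 h0
    rw [h, zero_dvd_iff] at this
    omega
  · have hdvd := (CharP.cast_eq_zero_iff k (ringChar k) j').1 h0
    have hle := Nat.le_of_dvd (by omega) hdvd
    omega

end LefAux

open LefAux in
/-- Lefschetz property: let `Λ` be the exterior algebra over a field `k` on a basis
`x_1,…,x_n,y_1,…,y_n` (degree one), and `w = ∑ x_i y_i`. If `char k = 0` or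
`char k > (n+1)/2`, then multiplication by `w`, as a map `Λ_i → Λ_{i+2}`, is injective
for `i ≤ n-1` and surjective for `i ≥ n-1`. Here `Λ_i = (range ι)^i` is the degree-`i`
component of the exterior algebra. -/
theorem stmt_5 (k V : Type*) [Field k] [AddCommGroup V] [Module k V] (n : ℕ)
    (b : Module.Basis (Fin n ⊕ Fin n) k V)
    (hchar : ∀ p : ℕ, CharP k p → p = 0 ∨ n + 1 < 2 * p) :
    let Λdeg : ℕ → Submodule k (ExteriorAlgebra k V) :=
      fun i => LinearMap.range (ι k : V →ₗ[k] ExteriorAlgebra k V) ^ i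
    let w : ExteriorAlgebra k V := ∑ i : Fin n, ι k (b (Sum.inl i)) * ι k (b (Sum.inr i))
    ∀ i : ℕ,
      (i + 1 ≤ n → ∀ x ∈ Λdeg i, w * x = 0 → x = 0) ∧
      (n ≤ i + 1 → ∀ y ∈ Λdeg (i + 2), ∃ x ∈ Λdeg i, w * x = y) := by
  intro Λdeg w i
  have hΛ : ∀ j : ℕ, Λdeg j = Lam b n j := by
    intro j
    show (LinearMap.range (ι k : V →ₗ[k] ExteriorAlgebra k V)) ^ j = Lam b n j
    rw [Lam, S_top]
  have hw : w = W b n := (W_eq b).symm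
  have hcc := char_cond (k := k) (n := n) hchar
  constructor
  · intro hi x hx hwx
    refine main_inj b n le_rfl 1 i le_rfl (by omega)
      (fun j' h1 h2 => hcc j' h1 (by omega)) x ?_ ?_
    · rw [← hΛ]; exact hx
    · rw [pow_one, ← hw]; exact hwx
  · intro hi y hy
    obtain ⟨x, hxmem, hxeq⟩ := main_surj b n le_rfl 1 i (by omega)
      (fun j' h1 h2 => hcc j' h1 (by omega)) y
      (by rw [show i + 2 * 1 = i + 2 by omega, ← hΛ]; exact hy)
    refine ⟨x, by rw [hΛ]; exact hxmem, ?_⟩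
    rw [hw]
    rw [← pow_one (W b n)]
    exact hxeq
end

section
/- Let k be a field of characteristic 0 and \Lambda the exterior algebra on x_1,...,x_n,y_1,...,y_n. Let \lambda_w be multiplication by w = \sum_i x_i y_i, let c = \sum_i y_i^* x_i^* be the degree -2 operator given by composing the contraction derivations dual to x_i and y_i, and let h = [c, \lambda_w]. Then h acts on \Lambda_j as multiplication by n - j, and moreover [c, h] = -2c and [\lambda_w, h] = 2\lambda_w, so that (\lambda_w, c, h) define an sl_2(k)-representation on \Lambda. -/
open ExteriorAlgebra Module

section Aux

variable {k V : Type*} [Field k] [AddCommGroup V] [Module k V]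

lemma aux_comm4 {k A : Type*} [CommRing k] [Ring A] [Algebra k A]
    (a b x y : A) (p q r s : k)
    (hbx : b * x = p • 1 - x * b) (hby : b * y = q • 1 - y * b)
    (hax : a * x = r • 1 - x * a) (hay : a * y = s • 1 - y * a) :
    a * b * (x * y) - x * y * (a * b)
      = (p * s - r * q) • (1 : A) - p • (y * a) + r • (y * b) + q • (x * a) - s • (x * b) := by
  have e1 : a * b * (x * y) = a * (b * x) * y := by noncomm_ring
  have e2 : a * (p • 1 - x * b) * y = p • (a * y) - a * x * (b * y) := by
    simp only [mul_sub, sub_mul, mul_smul_comm, smul_mul_assoc, mul_one, one_mul, mul_assoc]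
  have e3 : x * a * (y * b) = x * (a * y) * b := by noncomm_ring
  have e4 : x * (s • 1 - y * a) * b = s • (x * b) - x * y * (a * b) := by
    simp only [mul_sub, sub_mul, mul_smul_comm, smul_mul_assoc, mul_one, one_mul, mul_assoc]
  have e5 : (r • (1:A) - x * a) * (q • 1 - y * b)
      = (r * q) • 1 - r • (y * b) - q • (x * a) + x * a * (y * b) := by
    simp only [mul_sub, sub_mul, mul_smul_comm, smul_mul_assoc, smul_smul, mul_one, one_mul]
    module
  rw [e1, hbx, e2, hax, hay, hby, e5]
  rw [show x * a * (y * b) = s • (x * b) - x * y * (a * b) by rw [e3, hay, e4]]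
  module

lemma auxDM (f : Module.Dual k V) (v : V) :
    (CliffordAlgebra.contractLeft (Q := (0 : QuadraticForm k V)) f *
      LinearMap.mulLeft k (ι k v) : Module.End k (ExteriorAlgebra k V))
    = f v • 1 -
      LinearMap.mulLeft k (ι k v) *
        CliffordAlgebra.contractLeft (Q := (0 : QuadraticForm k V)) f := by
  ext a
  simp [Module.End.mul_apply, CliffordAlgebra.contractLeft_ι_mul]

lemma auxE {ι' : Type*} [Fintype ι'] (b : Basis ι' k V) (j : ℕ)
    (a : ExteriorAlgebra k V)
    (ha : a ∈ (LinearMap.range (ι k : V →ₗ[k] ExteriorAlgebra k V)) ^ j) :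
    (∑ e : ι', ι k (b e) *
      CliffordAlgebra.contractLeft (Q := (0 : QuadraticForm k V)) (b.coord e) a) = j • a := by
  induction ha using Submodule.pow_induction_on_left' with
  | algebraMap r => simp [CliffordAlgebra.contractLeft_algebraMap]
  | add x y i hx hy ihx ihy =>
      simp only [map_add, mul_add, Finset.sum_add_distrib, ihx, ihy, smul_add]
  | mem_mul m hm i x hx ih =>
    obtain ⟨v, rfl⟩ := hm
    have swap : ∀ u : V, ι k u * ι k v = -(ι k v * ι k u) := by
      intro u
      have h0 := CliffordAlgebra.ι_mul_ι_add_swap (Q := (0 : QuadraticForm k V)) u v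
      simp only [QuadraticMap.polar, QuadraticMap.zero_apply, sub_zero, zero_sub, neg_zero,
        map_zero] at h0
      exact eq_neg_of_add_eq_zero_left h0
    have step1 : (∑ e : ι', ι k (b e) *
        CliffordAlgebra.contractLeft (Q := (0 : QuadraticForm k V)) (b.coord e) (ι k v * x))
        = ∑ e : ι', ((b.coord e v) • (ι k (b e) * x) +
            ι k v * (ι k (b e) *
              CliffordAlgebra.contractLeft (Q := (0 : QuadraticForm k V)) (b.coord e) x)) := by
      refine Finset.sum_congr rfl fun e _ => ?_
      rw [CliffordAlgebra.contractLeft_ι_mul, mul_sub, ← mul_assoc, swap, neg_mul, mul_assoc,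
        sub_neg_eq_add, mul_smul_comm]
    rw [step1, Finset.sum_add_distrib, ← Finset.mul_sum, ih]
    have step2 : (∑ e : ι', (b.coord e v) • (ι k (b e) * x))
        = ι k v * x := by
      calc (∑ e : ι', (b.coord e v) • (ι k (b e) * x))
          = (∑ e : ι', (b.coord e v) • ι k (b e)) * x := by
            rw [Finset.sum_mul]; simp [smul_mul_assoc]
        _ = ι k (∑ e : ι', (b.coord e v) • b e) * x := by rw [map_sum]; simp only [map_smul]
        _ = ι k v * x := by
            simp only [Basis.coord_apply]
            rw [b.sum_repr v]
    rw [step2, mul_smul_comm, succ_nsmul]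
    exact add_comm _ _

lemma auxD_mem (f : Module.Dual k V) (j : ℕ) (a : ExteriorAlgebra k V)
    (ha : a ∈ (LinearMap.range (ι k : V →ₗ[k] ExteriorAlgebra k V)) ^ j) :
    CliffordAlgebra.contractLeft (Q := (0 : QuadraticForm k V)) f a ∈
        (LinearMap.range (ι k : V →ₗ[k] ExteriorAlgebra k V)) ^ (j - 1) ∧
      (j = 0 → CliffordAlgebra.contractLeft (Q := (0 : QuadraticForm k V)) f a = 0) := by
  induction ha using Submodule.pow_induction_on_left' with
  | algebraMap r =>
      refine ⟨?_, fun _ => ?_⟩ <;> simp [CliffordAlgebra.contractLeft_algebraMap]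
  | add x y i hx hy ihx ihy =>
      exact ⟨by rw [map_add]; exact add_mem ihx.1 ihy.1,
        fun h0 => by rw [map_add, ihx.2 h0, ihy.2 h0, add_zero]⟩
  | mem_mul m hm i x hx ih =>
      obtain ⟨v, rfl⟩ := hm
      refine ⟨?_, fun h0 => (Nat.succ_ne_zero i h0).elim⟩
      rw [CliffordAlgebra.contractLeft_ι_mul]
      simp only [Nat.succ_sub_one]
      refine sub_mem (Submodule.smul_mem _ _ hx) ?_
      rcases i with _ | m'
      · rw [ih.2 rfl, mul_zero]; exact zero_mem _
      · have h1 : CliffordAlgebra.contractLeft (Q := (0 : QuadraticForm k V)) f x ∈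
            (LinearMap.range (ι k : V →ₗ[k] ExteriorAlgebra k V)) ^ m' := by
          simpa using ih.1
        rw [pow_succ']
        exact Submodule.mul_mem_mul ⟨v, rfl⟩ h1

set_option maxHeartbeats 2000000 in
lemma aux_main (n : ℕ) (b : Basis (Fin n ⊕ Fin n) k V) :
    (∑ i : Fin n,
        (CliffordAlgebra.contractLeft (Q := (0 : QuadraticForm k V)) (b.coord (Sum.inr i)) *
          CliffordAlgebra.contractLeft (Q := (0 : QuadraticForm k V)) (b.coord (Sum.inl i)) :
            Module.End k (ExteriorAlgebra k V))) *
      (∑ j : Fin n, LinearMap.mulLeft k (ι k (b (Sum.inl j))) *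
          LinearMap.mulLeft k (ι k (b (Sum.inr j)))) -
    (∑ j : Fin n, LinearMap.mulLeft k (ι k (b (Sum.inl j))) *
          LinearMap.mulLeft k (ι k (b (Sum.inr j)))) *
      (∑ i : Fin n,
        (CliffordAlgebra.contractLeft (Q := (0 : QuadraticForm k V)) (b.coord (Sum.inr i)) *
          CliffordAlgebra.contractLeft (Q := (0 : QuadraticForm k V)) (b.coord (Sum.inl i)))) =
    n • (1 : Module.End k (ExteriorAlgebra k V)) -
      ∑ e : Fin n ⊕ Fin n, LinearMap.mulLeft k (ι k (b e)) *
        CliffordAlgebra.contractLeft (Q := (0 : QuadraticForm k V)) (b.coord e) := by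
  rw [Finset.sum_mul_sum, Finset.sum_mul_sum, Finset.sum_comm (s := Finset.univ)
    (t := Finset.univ), ← Finset.sum_sub_distrib]
  simp_rw [← Finset.sum_sub_distrib]
  have hterm : ∀ i j : Fin n,
      (CliffordAlgebra.contractLeft (Q := (0 : QuadraticForm k V)) (b.coord (Sum.inr i)) *
          CliffordAlgebra.contractLeft (Q := (0 : QuadraticForm k V)) (b.coord (Sum.inl i)) :
            Module.End k (ExteriorAlgebra k V)) *
        (LinearMap.mulLeft k (ι k (b (Sum.inl j))) * LinearMap.mulLeft k (ι k (b (Sum.inr j)))) -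
      LinearMap.mulLeft k (ι k (b (Sum.inl j))) * LinearMap.mulLeft k (ι k (b (Sum.inr j))) *
        (CliffordAlgebra.contractLeft (Q := (0 : QuadraticForm k V)) (b.coord (Sum.inr i)) *
          CliffordAlgebra.contractLeft (Q := (0 : QuadraticForm k V)) (b.coord (Sum.inl i))) =
      if i = j then
        (1 : Module.End k (ExteriorAlgebra k V)) -
          LinearMap.mulLeft k (ι k (b (Sum.inr j))) *
            CliffordAlgebra.contractLeft (Q := (0 : QuadraticForm k V)) (b.coord (Sum.inr j)) -
          LinearMap.mulLeft k (ι k (b (Sum.inl j))) *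
            CliffordAlgebra.contractLeft (Q := (0 : QuadraticForm k V)) (b.coord (Sum.inl j))
      else 0 := by
    intro i j
    rw [aux_comm4 (k := k) _ _ _ _ _ _ _ _ (auxDM _ _) (auxDM _ _) (auxDM _ _) (auxDM _ _)]
    by_cases hij : i = j
    · subst hij
      simp [Basis.coord_apply, Basis.repr_self, Finsupp.single_apply]
    · simp [Basis.coord_apply, Basis.repr_self, Finsupp.single_apply, hij,
        Ne.symm hij]
  calc (∑ x : Fin n, ∑ y : Fin n, _) = ∑ x : Fin n, ∑ y : Fin n,
        (if y = x then
          (1 : Module.End k (ExteriorAlgebra k V)) -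
            LinearMap.mulLeft k (ι k (b (Sum.inr x))) *
              CliffordAlgebra.contractLeft (Q := (0 : QuadraticForm k V)) (b.coord (Sum.inr x)) -
            LinearMap.mulLeft k (ι k (b (Sum.inl x))) *
              CliffordAlgebra.contractLeft (Q := (0 : QuadraticForm k V)) (b.coord (Sum.inl x))
        else 0) := Finset.sum_congr rfl fun x _ => Finset.sum_congr rfl fun y _ => hterm y x
    _ = n • (1 : Module.End k (ExteriorAlgebra k V)) -
      ∑ e : Fin n ⊕ Fin n, LinearMap.mulLeft k (ι k (b e)) *
        CliffordAlgebra.contractLeft (Q := (0 : QuadraticForm k V)) (b.coord e) := by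
      simp_rw [Finset.sum_ite_eq', Finset.mem_univ, if_true]
      rw [Finset.sum_sub_distrib, Finset.sum_sub_distrib, Finset.sum_const, Finset.card_univ,
        Fintype.card_fin, Fintype.sum_sum_type]
      abel
end Aux

set_option maxHeartbeats 2000000 in
/-- `sl₂`-structure on the exterior algebra: let `k` be a field of characteristic `0`
and `Λ` the exterior algebra on `x_1,…,x_n,y_1,…,y_n`. Let `λ_w` be multiplication by
`w = ∑ x_i y_i`, let `c = ∑ y_i* ∘ x_i*` (composites of the contraction operators dual
to the basis), and `h = [c, λ_w]`. Then `h` acts on `Λ_j` as multiplication by `n - j`,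
`[c, h] = -2c` and `[λ_w, h] = 2λ_w`, so `(λ_w, c, h)` define an `sl₂(k)`-representation
on `Λ`. -/
theorem stmt_15 (k V : Type*) [Field k] [CharZero k] [AddCommGroup V] [Module k V]
    (n : ℕ) (b : Basis (Fin n ⊕ Fin n) k V) :
    let w : ExteriorAlgebra k V := ∑ i : Fin n, ι k (b (Sum.inl i)) * ι k (b (Sum.inr i))
    let L : ExteriorAlgebra k V →ₗ[k] ExteriorAlgebra k V := LinearMap.mulLeft k w
    let c : ExteriorAlgebra k V →ₗ[k] ExteriorAlgebra k V :=
      ∑ i : Fin n,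
        (CliffordAlgebra.contractLeft (Q := (0 : QuadraticForm k V)) (b.coord (Sum.inr i))) ∘ₗ
          (CliffordAlgebra.contractLeft (Q := (0 : QuadraticForm k V)) (b.coord (Sum.inl i)))
    let h : ExteriorAlgebra k V →ₗ[k] ExteriorAlgebra k V := c ∘ₗ L - L ∘ₗ c
    (∀ j : ℕ, ∀ a ∈ (LinearMap.range (ι k : V →ₗ[k] ExteriorAlgebra k V) ^ j :
        Submodule k (ExteriorAlgebra k V)), h a = ((n : ℤ) - (j : ℤ)) • a) ∧
      c ∘ₗ h - h ∘ₗ c = (-2 : ℤ) • c ∧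
      L ∘ₗ h - h ∘ₗ L = (2 : ℤ) • L := by
  intro w L c h
  -- express L as a sum of products of left multiplications
  have hL : L = ∑ j : Fin n, LinearMap.mulLeft k (ι k (b (Sum.inl j))) *
      LinearMap.mulLeft k (ι k (b (Sum.inr j))) := by
    ext a
    simp [L, w, LinearMap.sum_apply, Module.End.mul_apply, Finset.sum_mul, mul_assoc]
  have hh : c ∘ₗ L - L ∘ₗ c = n • (1 : Module.End k (ExteriorAlgebra k V)) -
      ∑ e : Fin n ⊕ Fin n, LinearMap.mulLeft k (ι k (b e)) *
        CliffordAlgebra.contractLeft (Q := (0 : QuadraticForm k V)) (b.coord e) := by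
    rw [hL]
    exact aux_main n b
  -- part 1
  have key : ∀ j : ℕ, ∀ a ∈ (LinearMap.range (ι k : V →ₗ[k] ExteriorAlgebra k V) ^ j :
      Submodule k (ExteriorAlgebra k V)), h a = ((n : ℤ) - (j : ℤ)) • a := by
    intro j a ha
    have h1 : h a = n • a - j • a := by
      calc h a = (n • (1 : Module.End k (ExteriorAlgebra k V)) -
          ∑ e : Fin n ⊕ Fin n, LinearMap.mulLeft k (ι k (b e)) *
            CliffordAlgebra.contractLeft (Q := (0 : QuadraticForm k V)) (b.coord e)) a := by
            rw [show h = c ∘ₗ L - L ∘ₗ c from rfl, hh]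
        _ = n • a - ∑ e : Fin n ⊕ Fin n, ι k (b e) *
              CliffordAlgebra.contractLeft (Q := (0 : QuadraticForm k V)) (b.coord e) a := by
            simp [LinearMap.sub_apply, LinearMap.smul_apply, LinearMap.sum_apply,
              Module.End.mul_apply]
        _ = n • a - j • a := by rw [auxE b j a ha]
    rw [h1, sub_smul, natCast_zsmul, natCast_zsmul]
  refine ⟨key, ?_, ?_⟩
  · -- [c, h] = -2 c
    have c_zero : ∀ j : ℕ, ∀ a ∈ (LinearMap.range (ι k : V →ₗ[k] ExteriorAlgebra k V) ^ j :
        Submodule k (ExteriorAlgebra k V)), j ≤ 1 → c a = 0 := by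
      intro j a ha hj
      have : ∀ i : Fin n,
          CliffordAlgebra.contractLeft (Q := (0 : QuadraticForm k V)) (b.coord (Sum.inr i))
            (CliffordAlgebra.contractLeft (Q := (0 : QuadraticForm k V)) (b.coord (Sum.inl i)) a)
          = 0 := by
        intro i
        interval_cases j
        · rw [(auxD_mem (b.coord (Sum.inl i)) 0 a ha).2 rfl, map_zero]
        · have h1 := (auxD_mem (b.coord (Sum.inl i)) 1 a ha).1
          exact (auxD_mem (b.coord (Sum.inr i)) 0 _ (by simpa using h1)).2 rfl
      simp [c, LinearMap.sum_apply, LinearMap.comp_apply, this]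
    have c_mem : ∀ j : ℕ, ∀ a ∈ (LinearMap.range (ι k : V →ₗ[k] ExteriorAlgebra k V) ^ j :
        Submodule k (ExteriorAlgebra k V)),
        c a ∈ (LinearMap.range (ι k : V →ₗ[k] ExteriorAlgebra k V) ^ (j - 2) :
          Submodule k (ExteriorAlgebra k V)) := by
      intro j a ha
      have : c a = ∑ i : Fin n,
          CliffordAlgebra.contractLeft (Q := (0 : QuadraticForm k V)) (b.coord (Sum.inr i))
            (CliffordAlgebra.contractLeft (Q := (0 : QuadraticForm k V)) (b.coord (Sum.inl i)) a) := by
        simp [c, LinearMap.sum_apply, LinearMap.comp_apply]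
      rw [this]
      refine Submodule.sum_mem _ fun i _ => ?_
      have h1 := (auxD_mem (b.coord (Sum.inl i)) j a ha).1
      have h2 := (auxD_mem (b.coord (Sum.inr i)) (j - 1) _ h1).1
      have : j - 1 - 1 = j - 2 := by omega
      rwa [this] at h2
    refine LinearMap.ext fun a => ?_
    refine DirectSum.Decomposition.inductionOn
      (ℳ := fun i : ℕ => (⋀[k]^i V : Submodule k (ExteriorAlgebra k V)))
      (motive := fun x => (c ∘ₗ h - h ∘ₗ c) x = ((-2 : ℤ) • c) x) (by simp) ?_ ?_ a
    · rintro i ⟨a, ha⟩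
      simp only [LinearMap.sub_apply, LinearMap.comp_apply, LinearMap.smul_apply]
      rw [key i a ha, map_zsmul]
      rcases le_or_gt i 1 with hi | hi
      · rw [c_zero i a ha hi]
        simp
      · obtain ⟨m', rfl⟩ : ∃ m', i = m' + 2 := ⟨i - 2, by omega⟩
        have h2 : c a ∈ (LinearMap.range (ι k : V →ₗ[k] ExteriorAlgebra k V) ^ m' :
            Submodule k (ExteriorAlgebra k V)) := by simpa using c_mem _ a ha
        rw [key m' (c a) h2, ← sub_smul]
        congr 1
        push_cast
        ring
    · intro a1 a2 h1 h2
      simp only [LinearMap.sub_apply, LinearMap.comp_apply, LinearMap.smul_apply,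
        map_add, smul_add] at h1 h2 ⊢
      rw [h1, h2]
  · -- [L, h] = 2 L
    have L_mem : ∀ j : ℕ, ∀ a ∈ (LinearMap.range (ι k : V →ₗ[k] ExteriorAlgebra k V) ^ j :
        Submodule k (ExteriorAlgebra k V)),
        L a ∈ (LinearMap.range (ι k : V →ₗ[k] ExteriorAlgebra k V) ^ (j + 2) :
          Submodule k (ExteriorAlgebra k V)) := by
      intro j a ha
      have hw : w ∈ (LinearMap.range (ι k : V →ₗ[k] ExteriorAlgebra k V) ^ 2 :
          Submodule k (ExteriorAlgebra k V)) := by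
        rw [sq]
        exact Submodule.sum_mem _ fun i _ =>
          Submodule.mul_mem_mul ⟨_, rfl⟩ ⟨_, rfl⟩
      have h1 : w * a ∈ (LinearMap.range (ι k : V →ₗ[k] ExteriorAlgebra k V) ^ 2 *
          LinearMap.range (ι k : V →ₗ[k] ExteriorAlgebra k V) ^ j :
          Submodule k (ExteriorAlgebra k V)) := Submodule.mul_mem_mul hw ha
      rw [← pow_add] at h1
      have : 2 + j = j + 2 := by omega
      rw [this] at h1
      exact h1
    refine LinearMap.ext fun a => ?_
    refine DirectSum.Decomposition.inductionOn
      (ℳ := fun i : ℕ => (⋀[k]^i V : Submodule k (ExteriorAlgebra k V)))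
      (motive := fun x => (L ∘ₗ h - h ∘ₗ L) x = ((2 : ℤ) • L) x) (by simp) ?_ ?_ a
    · rintro i ⟨a, ha⟩
      simp only [LinearMap.sub_apply, LinearMap.comp_apply, LinearMap.smul_apply]
      rw [key i a ha, map_zsmul, key (i + 2) (L a) (L_mem i a ha), ← sub_smul]
      congr 1
      push_cast
      ring
    · intro a1 a2 h1 h2
      simp only [LinearMap.sub_apply, LinearMap.comp_apply, LinearMap.smul_apply,
        map_add, smul_add] at h1 h2 ⊢
      rw [h1, h2]
end
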